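/- Fix an odd integer n ≥ 3, a positive integer e dividing (n+1)/2, and an integer r with 0 ≤ r ≤ e−1. Let Λ_M be the subgroup of ℤ^n generated by the vectors α_i + α_{i+1} (2 ≤ i ≤ n−1) together with e·e_{n−1} and r·e_{n−1} + e_n; Λ_M is a free ℤ-module of rank n. Consider the linear functionals on ℤ^n given by φ_0(x) = −(x_1 + x_2 + ⋯ + x_n) and φ_j(x) = x_j for j ∈ {2, 4, 6, …, n−1} (these are the pairings with the coroots ᾱ_0^∨, α_2^∨, α_4^∨, …, α_{n−1}^∨ in the fundamental-weight coordinates). Then the restrictions of the (n+1)/2 functionals φ_0, φ_2, φ_4, …, φ_{n−1} to Λ_M form a subset of a ℤ-basis of the dual module Hom_ℤ(Λ_M, ℤ). -/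

import Mathlib

/-- The simple roots of the root system `A_n`, written in the coordinates of the
fundamental weights (identifying the weight lattice with `ℤ^n` via `ω_i ↦ e_i`);
`ArootA n i` (0-based `i`) is the simple root `α_{i+1}`, the `(i+1)`-st column of
the Cartan matrix of `A_n`. -/
def ArootA (n : ℕ) (i : Fin n) : Fin n → ℤ := fun j =>
  if j = i then 2
  else if (j : ℕ) + 1 = (i : ℕ) ∨ (i : ℕ) + 1 = (j : ℕ) then -1
  else 0

/-- standard basis vector `e_{m+1}` (0-based index `m`), zero when out of range -/
def Vv (n m : ℕ) : Fin n → ℤ := fun j => if (j : ℕ) = m then 1 else 0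

def ff (n m : ℕ) : Fin n → ℤ := Vv n (m+1) - Vv n m

/-- the generator `α_{m+2} + α_{m+3}` (1-based), i.e. `-e_m + e_{m+1} + e_{m+2} - e_{m+3}` 0-based -/
def Wm (n m : ℕ) : Fin n → ℤ := ff n m - ff n (m+2)

lemma Vv_eq_zero {n m : ℕ} (h : n ≤ m) : Vv n m = 0 := by
  funext j; simp only [Vv, Pi.zero_apply, ite_eq_right_iff]
  intro hj; have := j.isLt; omega

lemma sum_Vv (n m : ℕ) : (∑ j : Fin n, Vv n m j) = if m < n then 1 else 0 := by
  simp only [Vv]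
  rcases Nat.lt_or_ge m n with h | h
  · rw [if_pos h, Finset.sum_eq_single (⟨m, h⟩ : Fin n)]
    · simp
    · intro b _ hb
      rw [if_neg]
      intro hbm
      exact hb (Fin.ext hbm)
    · simp
  · rw [if_neg (by omega), Finset.sum_eq_zero]
    intro j _
    rw [if_neg (by have := j.isLt; omega)]

lemma Vv_single {n : ℕ} (c : ℕ) (h : c < n) : Pi.single (⟨c, h⟩ : Fin n) (1 : ℤ) = Vv n c := by
  funext j
  rw [Pi.single_apply, Vv]
  by_cases hj : (j : ℕ) = c
  · rw [if_pos (Fin.ext hj), if_pos hj]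
  · rw [if_neg (fun hh => hj (by rw [hh]) ), if_neg hj]

lemma Wm_eq_gen {n : ℕ} (m : ℕ) (h : m + 2 < n) :
    ArootA n ⟨m + 1, by omega⟩ + ArootA n ⟨m + 1 + 1, h⟩ = Wm n m := by
  funext j
  have hj := j.isLt
  simp only [ArootA, Wm, ff, Vv, Pi.add_apply, Pi.sub_apply, Fin.ext_iff]
  split_ifs <;> omega

lemma sum_Wm_even (n d c : ℕ) (hnd : n + 1 = 2 * d) (hc : c ≤ d - 1) (hd : 1 ≤ d) :
    ∑ k ∈ Finset.Ico c (d-1), Wm n (2*k) = Vv n (2*c+1) - Vv n (2*c) + Vv n (n-1) := by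
  rw [Finset.sum_Ico_eq_sum_range]
  have h1 : ∀ k, Wm n (2*(c+k)) = ff n (2*(c+k)) - ff n (2*(c+(k+1))) := by
    intro k
    rw [Wm, show 2*(c+k)+2 = 2*(c+(k+1)) by ring]
  calc ∑ k ∈ Finset.range (d-1-c), Wm n (2*(c+k))
      = ∑ k ∈ Finset.range (d-1-c), (ff n (2*(c+k)) - ff n (2*(c+(k+1)))) :=
        Finset.sum_congr rfl (fun k _ => h1 k)
    _ = ff n (2*(c+0)) - ff n (2*(c+(d-1-c))) := Finset.sum_range_sub' (fun i => ff n (2*(c+i))) (d-1-c)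
    _ = Vv n (2*c+1) - Vv n (2*c) + Vv n (n-1) := by
        rw [show 2*(c+(d-1-c)) = n-1 by omega, show 2*(c+0) = 2*c by ring, ff, ff,
          show n-1+1 = n by omega, Vv_eq_zero (le_refl n)]
        abel

lemma sum_Wm_odd (n d c : ℕ) (hnd : n + 1 = 2 * d) (hc : c ≤ d - 2) (hd : 2 ≤ d) :
    ∑ k ∈ Finset.Ico c (d-2), Wm n (2*k+1) = Vv n (2*c+2) - Vv n (2*c+1) + Vv n (n-2) - Vv n (n-1) := by
  rw [Finset.sum_Ico_eq_sum_range]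
  have h1 : ∀ k, Wm n (2*(c+k)+1) = ff n (2*(c+k)+1) - ff n (2*(c+(k+1))+1) := by
    intro k
    rw [Wm, show 2*(c+k)+1+2 = 2*(c+(k+1))+1 by ring]
  calc ∑ k ∈ Finset.range (d-2-c), Wm n (2*(c+k)+1)
      = ∑ k ∈ Finset.range (d-2-c), (ff n (2*(c+k)+1) - ff n (2*(c+(k+1))+1)) :=
        Finset.sum_congr rfl (fun k _ => h1 k)
    _ = ff n (2*(c+0)+1) - ff n (2*(c+(d-2-c))+1) :=
        Finset.sum_range_sub' (fun i => ff n (2*(c+i)+1)) (d-2-c)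
    _ = Vv n (2*c+2) - Vv n (2*c+1) + Vv n (n-2) - Vv n (n-1) := by
        rw [show 2*(c+(d-2-c))+1 = n-2 by omega, show 2*(c+0)+1 = 2*c+1 by ring, ff, ff,
          show 2*c+1+1 = 2*c+2 by ring, show n-2+1 = n-1 by omega]
        abel

set_option maxHeartbeats 2000000 in
/-- Case `A_n^{(1)}`, `n` odd (`n + 1 = 2d`): let `Λ_M ⊆ ℤ^n` be the submodule
generated by the sums of neighboring simple roots `α_i + α_{i+1}` for
`2 ≤ i ≤ n-1`, together with `e·ω_{n-1}` and `r·ω_{n-1} + ω_n`, where `e ≥ 1`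
divides `(n+1)/2 = d` and `0 ≤ r ≤ e-1`.  Then `Λ_M` is free of rank `n`, and the
restrictions to `Λ_M` of the `d` coroot functionals `ᾱ_0^∨ : x ↦ -(x_1 + ⋯ + x_n)`
and `α_j^∨ : x ↦ x_j` for even `j ∈ {2, 4, …, n-1}` form a subset of a `ℤ`-basis of
the dual module `Hom_ℤ(Λ_M, ℤ)`. -/
theorem even_coroots_part_of_basis_of_dual
    (n d : ℕ) (hn : 3 ≤ n) (hnd : n + 1 = 2 * d)
    (e : ℤ) (he : 1 ≤ e) (hed : e ∣ (d : ℤ))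
    (r : ℤ) (hr0 : 0 ≤ r) (hre : r ≤ e - 1)
    (Λ : Submodule ℤ (Fin n → ℤ))
    (hΛ : Λ = Submodule.span ℤ
      ({v | ∃ (i : ℕ) (h : i + 1 < n), 1 ≤ i ∧
          v = ArootA n ⟨i, by omega⟩ + ArootA n ⟨i + 1, h⟩} ∪
       {e • Pi.single (⟨n - 2, by omega⟩ : Fin n) (1 : ℤ),
        r • Pi.single (⟨n - 2, by omega⟩ : Fin n) (1 : ℤ) +
          Pi.single (⟨n - 1, by omega⟩ : Fin n) (1 : ℤ)}))
    (φ : Fin d → ((Fin n → ℤ) →ₗ[ℤ] ℤ))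
    (hφ : ∀ (t : Fin d) (x : Fin n → ℤ),
      φ t x = if (t : ℕ) = 0 then -(∑ j, x j)
        else x ⟨2 * (t : ℕ) - 1, by have := t.isLt; omega⟩) :
    Nonempty (Module.Basis (Fin n) ℤ Λ) ∧
    ∃ (ι : Type) (b : Module.Basis ι ℤ (Λ →ₗ[ℤ] ℤ)) (g : Fin d ↪ ι),
      ∀ t : Fin d, b (g t) = (φ t).comp Λ.subtype := by
  have hd2 : 2 ≤ d := by omega
  have he0 : e ≠ 0 := by omega
  -- membership of generators
  have hmemW : ∀ m : ℕ, m + 3 ≤ n → Wm n m ∈ Λ := by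
    intro m hm
    rw [hΛ]
    apply Submodule.subset_span
    left
    exact ⟨m + 1, by omega, by omega, (Wm_eq_gen m (by omega)).symm⟩
  have hu : e • Vv n (n-2) ∈ Λ := by
    rw [hΛ, ← Vv_single (n-2) (by omega)]
    exact Submodule.subset_span (Or.inr (Or.inl rfl))
  have hv : r • Vv n (n-2) + Vv n (n-1) ∈ Λ := by
    rw [hΛ, ← Vv_single (n-2) (by omega), ← Vv_single (n-1) (by omega)]
    exact Submodule.subset_span (Or.inr (Or.inr rfl))
  -- sums of generators are in Λ
  have hmemSA : ∀ c : ℕ, (∑ k ∈ Finset.Ico c (d-1), Wm n (2*k)) ∈ Λ := by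
    intro c
    apply Submodule.sum_mem
    intro k hk
    rw [Finset.mem_Ico] at hk
    exact hmemW _ (by omega)
  have hmemSB : ∀ c : ℕ, (∑ k ∈ Finset.Ico c (d-2), Wm n (2*k+1)) ∈ Λ := by
    intro c
    apply Submodule.sum_mem
    intro k hk
    rw [Finset.mem_Ico] at hk
    exact hmemW _ (by omega)
  -- the difference vectors e•(V(m+1) - V m)
  have hD : ∀ m : ℕ, m + 3 ≤ n → e • (Vv n (m+1) - Vv n m) ∈ Λ := by
    intro m hm
    rcases Nat.even_or_odd m with ⟨c, hc⟩ | ⟨c, hc⟩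
    · -- m = 2c : e•SA_c - e•v + r•u
      have key : e • (Vv n (m+1) - Vv n m) =
          e • (∑ k ∈ Finset.Ico c (d-1), Wm n (2*k))
            - e • (r • Vv n (n-2) + Vv n (n-1)) + r • (e • Vv n (n-2)) := by
        rw [sum_Wm_even n d c hnd (by omega) (by omega), show 2*c = m by omega,
          show m + 1 = m+1 from rfl]
        module
      rw [key]
      exact Submodule.add_mem _ (Submodule.sub_mem _ (Submodule.smul_mem _ _ (hmemSA c))
        (Submodule.smul_mem _ _ hv)) (Submodule.smul_mem _ _ hu)
    · -- m = 2c+1 : e•SB_c + e•v - (r+1)•u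
      have key : e • (Vv n (m+1) - Vv n m) =
          e • (∑ k ∈ Finset.Ico c (d-2), Wm n (2*k+1))
            + e • (r • Vv n (n-2) + Vv n (n-1)) - (r+1) • (e • Vv n (n-2)) := by
        rw [sum_Wm_odd n d c hnd (by omega) (by omega), show 2*c+1 = m by omega,
          show 2*c+2 = m+1 by omega]
        module
      rw [key]
      exact Submodule.sub_mem _ (Submodule.add_mem _ (Submodule.smul_mem _ _ (hmemSB c))
        (Submodule.smul_mem _ _ hv)) (Submodule.smul_mem _ _ hu)
  -- all e • V j are in Λ
  have heV : ∀ j : ℕ, j < n → e • Vv n j ∈ Λ := by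
    have hlast : e • Vv n (n-1) ∈ Λ := by
      have key : e • Vv n (n-1) =
          e • (r • Vv n (n-2) + Vv n (n-1)) - r • (e • Vv n (n-2)) := by module
      rw [key]
      exact Submodule.sub_mem _ (Submodule.smul_mem _ _ hv) (Submodule.smul_mem _ _ hu)
    have hdown : ∀ t : ℕ, t ≤ n - 2 → e • Vv n (n-2-t) ∈ Λ := by
      intro t
      induction t with
      | zero => intro _; exact hu
      | succ t ih =>
        intro ht
        have h1 : e • Vv n (n-2-(t+1)) =
            e • Vv n (n-2-t) - e • (Vv n ((n-3-t)+1) - Vv n (n-3-t)) := by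
          rw [show (n-3-t)+1 = n-2-t by omega, show n-2-(t+1) = n-3-t by omega]
          module
        rw [h1]
        exact Submodule.sub_mem _ (ih (by omega)) (hD (n-3-t) (by omega))
    intro j hj
    rcases Nat.lt_or_ge j (n-1) with h | h
    · have := hdown (n-2-j) (by omega)
      rwa [show n-2-(n-2-j) = j by omega] at this
    · rw [show j = n-1 by omega]
      exact hlast
  -- linear independence of (e • V j)
  have hind : LinearIndependent ℤ (fun j : Fin n => (⟨e • Vv n (j : ℕ), heV j j.isLt⟩ : Λ)) := by
    apply LinearIndependent.of_comp Λ.subtype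
    have hcomp : (⇑Λ.subtype ∘ fun j : Fin n => (⟨e • Vv n (j : ℕ), heV j j.isLt⟩ : Λ))
        = fun j : Fin n => e • Vv n (j : ℕ) := rfl
    rw [hcomp, Fintype.linearIndependent_iff]
    intro g hg i
    have := congrFun hg i
    simp only [Finset.sum_apply, Pi.smul_apply, Pi.zero_apply, Vv, smul_eq_mul] at this
    rw [Finset.sum_eq_single i] at this
    · simp only [if_pos rfl, if_true, mul_one, mul_eq_zero] at this
      tauto
    · intro b _ hb
      rw [if_neg (fun hh => hb (Fin.ext hh.symm)), mul_zero, mul_zero]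
    · simp
  have hrank : Module.finrank ℤ ↥Λ = n := by
    refine le_antisymm ?_ ?_
    · calc Module.finrank ℤ ↥Λ ≤ Module.finrank ℤ (Fin n → ℤ) := Submodule.finrank_le Λ
        _ = n := by rw [Module.finrank_pi]; simp
    · calc n = Fintype.card (Fin n) := (Fintype.card_fin n).symm
        _ ≤ Module.finrank ℤ ↥Λ := hind.fintype_card_le_finrank
  constructor
  · exact ⟨(Module.finBasis ℤ ↥Λ).reindex (finCongr hrank)⟩
  -- evaluation of the functionals on Vv
  have hφV : ∀ (t : Fin d) (m : ℕ), φ t (Vv n m) =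
      if (t : ℕ) = 0 then -(if m < n then 1 else 0)
      else (if m + 1 = 2 * (t : ℕ) then 1 else 0) := by
    intro t m
    rw [hφ]
    by_cases ht : (t : ℕ) = 0
    · rw [if_pos ht, if_pos ht, sum_Vv]
    · rw [if_neg ht, if_neg ht]
      show (if (2 * (t:ℕ) - 1 : ℕ) = m then (1:ℤ) else 0) = _
      split_ifs <;> omega
  have hWn3 : Wm n (n-3) = Vv n (n-2) - Vv n (n-3) + Vv n (n-1) := by
    rw [Wm, ff, ff, show n-3+1 = n-2 by omega, show n-3+2 = n-1 by omega,
      show n-1+1 = n by omega, Vv_eq_zero (le_refl n)]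
    abel
  -- preimages of the standard dual basis
  have hy : ∀ s : Fin d, ∃ x, x ∈ Λ ∧ ∀ t : Fin d, φ t x = if t = s then 1 else 0 := by
    intro s
    by_cases hs : (s : ℕ) = 0
    · refine ⟨r • Wm n (n-3) - (r • Vv n (n-2) + Vv n (n-1)), ?_, ?_⟩
      · exact Submodule.sub_mem _ (Submodule.smul_mem _ _ (hmemW (n-3) (by omega))) hv
      · intro t
        rw [hWn3]
        simp only [map_sub, map_add, map_smul, smul_eq_mul, hφV, Fin.ext_iff]
        split_ifs <;> first | (exfalso; omega) | ring1
    · refine ⟨r • Wm n (n-3) - (r • Vv n (n-2) + Vv n (n-1))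
          + (∑ k ∈ Finset.Ico ((s:ℕ)-1) (d-1), Wm n (2*k)), ?_, ?_⟩
      · exact Submodule.add_mem _ (Submodule.sub_mem _
          (Submodule.smul_mem _ _ (hmemW (n-3) (by omega))) hv) (hmemSA _)
      · intro t
        rw [hWn3, sum_Wm_even n d ((s:ℕ)-1) hnd (by omega) (by omega)]
        simp only [map_sub, map_add, map_smul, smul_eq_mul, hφV, Fin.ext_iff]
        split_ifs <;> first | (exfalso; omega) | ring1
  -- the evaluation map into ℤ^d
  set F : ↥Λ →ₗ[ℤ] (Fin d → ℤ) := LinearMap.pi (fun t : Fin d => (φ t).comp Λ.subtype) with hF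
  have hFap : ∀ (x : ↥Λ) (t : Fin d), F x t = φ t (x : Fin n → ℤ) := by
    intro x t; rw [hF, LinearMap.pi_apply, LinearMap.comp_apply, Submodule.coe_subtype]
  have hFsurj : Function.Surjective F := by
    rw [← LinearMap.range_eq_top, ← top_le_iff, ← (Pi.basisFun ℤ (Fin d)).span_eq,
      Submodule.span_le]
    rintro _ ⟨s, rfl⟩
    obtain ⟨x, hxΛ, hx⟩ := hy s
    refine ⟨⟨x, hxΛ⟩, ?_⟩
    funext t
    rw [hFap, hx t, Pi.basisFun_apply, Pi.single_apply]
  obtain ⟨sec, hsec⟩ := Module.projective_lifting_property F LinearMap.id hFsurj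
  have hsec' : ∀ z, F (sec z) = z := by
    intro z
    have := LinearMap.ext_iff.mp hsec z
    simpa using this
  set K := LinearMap.ker F with hK
  set P : ↥Λ →ₗ[ℤ] ↥Λ := LinearMap.id - sec ∘ₗ F with hP
  have hker : ∀ x : ↥Λ, P x ∈ K := by
    intro x
    rw [hP]
    simp only [LinearMap.sub_apply, LinearMap.id_apply, LinearMap.comp_apply]
    rw [hK, LinearMap.mem_ker, map_sub, hsec', sub_self]
  set fwd : ↥Λ →ₗ[ℤ] ↥K × (Fin d → ℤ) :=
    (LinearMap.codRestrict K P hker).prod F with hfwd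
  set bwd : ↥K × (Fin d → ℤ) →ₗ[ℤ] ↥Λ :=
    K.subtype ∘ₗ LinearMap.fst ℤ ↥K (Fin d → ℤ) + sec ∘ₗ LinearMap.snd ℤ ↥K (Fin d → ℤ) with hbwd
  have hfb : fwd ∘ₗ bwd = LinearMap.id := by
    apply LinearMap.ext
    rintro ⟨⟨k, hk⟩, z⟩
    have hFk : F k = 0 := hk
    apply Prod.ext
    · apply Subtype.ext
      simp only [hfwd, hbwd, hP, LinearMap.comp_apply, LinearMap.prod_apply, Function.prod,
        LinearMap.codRestrict_apply, LinearMap.add_apply, LinearMap.fst_apply,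
        LinearMap.snd_apply, Submodule.coe_subtype, LinearMap.sub_apply, LinearMap.id_apply,
        LinearMap.id_coe, id_eq]
      rw [map_add, hFk, zero_add, hsec']
      simp
    · simp only [hfwd, hbwd, LinearMap.comp_apply, LinearMap.prod_apply, Function.prod,
        LinearMap.add_apply, LinearMap.fst_apply, LinearMap.snd_apply, Submodule.coe_subtype,
        LinearMap.id_coe, id_eq]
      rw [map_add, hFk, zero_add, hsec']
  have hbf : bwd ∘ₗ fwd = LinearMap.id := by
    apply LinearMap.ext
    intro x
    simp only [hfwd, hbwd, hP, LinearMap.comp_apply, LinearMap.prod_apply, Function.prod,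
      LinearMap.codRestrict_apply, LinearMap.add_apply, LinearMap.fst_apply,
      LinearMap.snd_apply, Submodule.coe_subtype, LinearMap.sub_apply, LinearMap.id_apply,
      LinearMap.id_coe, id_eq]
    abel
  set EL : ↥Λ ≃ₗ[ℤ] ↥K × (Fin d → ℤ) := LinearEquiv.ofLinear fwd bwd hfb hbf with hEL
  obtain ⟨m, bK⟩ := Submodule.basisOfPid (Module.finBasis ℤ ↥Λ) K
  set bdual : Module.Basis (Fin d) ℤ (Module.Dual ℤ (Fin d → ℤ)) := (Pi.basisFun ℤ (Fin d)).dualBasis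
    with hbdual
  set bfin : Module.Basis ((Fin m) ⊕ Fin d) ℤ (Module.Dual ℤ ↥Λ) :=
    ((bK.dualBasis.prod bdual).map (Module.dualProdDualEquivDual ℤ ↥K (Fin d → ℤ))).map
      EL.dualMap with hbfin
  refine ⟨_, bfin, ⟨Sum.inr, Sum.inr_injective⟩, ?_⟩
  intro t
  apply LinearMap.ext
  intro x
  have h1 : bfin (Sum.inr t) = EL.dualMap
      ((Module.dualProdDualEquivDual ℤ ↥K (Fin d → ℤ)) (0, bdual t)) := by
    rw [hbfin, Module.Basis.map_apply, Module.Basis.map_apply, Module.Basis.prod_apply]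
    simp
  simp only [Function.Embedding.coeFn_mk]
  rw [h1, LinearEquiv.dualMap_apply, Module.dualProdDualEquivDual_apply,
    LinearMap.coprod_apply, LinearMap.zero_apply, zero_add]
  have h2 : (EL x).2 = F x := by
    rw [hEL, LinearEquiv.ofLinear_apply, hfwd, LinearMap.prod_apply]
    rfl
  rw [h2, hbdual, Module.Basis.coe_dualBasis, Module.Basis.coord_apply, Pi.basisFun_repr, hFap,
    LinearMap.comp_apply, Submodule.coe_subtype]
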